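/- Let n, k be integers with k ≥ 1, and let γ be a real number with 0 < γ and k < n/2 − γ; set a₀ = (n−k−2)/2. Then for every real a ≥ a₀, the function b ↦ Θʳ(γ,a,b) tends to +∞ as b → +∞. -/

import Mathlib

open MeasureTheory Filter Set
open scoped FourierTransform Topology

/-- The Fourier symbol at a real argument `b`. -/
noncomputable def ThetaR (γ a b : ℝ) : ℝ :=
  (4 : ℝ) ^ γ * ‖Complex.Gamma (((1 + γ + a) / 2 : ℝ) + (b / 2 : ℝ) * Complex.I)‖ ^ 2 /
    ‖Complex.Gamma (((1 - γ + a) / 2 : ℝ) + (b / 2 : ℝ) * Complex.I)‖ ^ 2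

lemma exp_image_Iio : Real.exp '' Set.Iio 0 = Set.Ioo 0 1 := by
  ext t
  constructor
  · rintro ⟨u, hu, rfl⟩
    exact ⟨Real.exp_pos u, Real.exp_lt_one_iff.mpr hu⟩
  · intro ht
    exact ⟨Real.log t, Real.log_neg ht.1 ht.2, Real.exp_log ht.1⟩

lemma ofReal_exp_cpow (v : ℝ) (c : ℂ) :
    ((Real.exp v : ℝ) : ℂ) ^ c = Complex.exp (v * c) := by
  rw [Complex.ofReal_exp, Complex.cpow_def_of_ne_zero (Complex.exp_ne_zero _),
    Complex.log_exp (by simpa using Real.pi_pos) (by simpa using Real.pi_pos.le)]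

/-- Riemann–Lebesgue: the Beta integral tends to zero along vertical lines. -/
lemma beta_tendsto_zero {x γ : ℝ} (hx : 0 < x) (hγ : 0 < γ) :
    Tendsto (fun b : ℝ =>
      Complex.betaIntegral ((x : ℂ) + (b / 2 : ℝ) * Complex.I) (γ : ℂ)) atTop (𝓝 0) := by
  set g0 : ℝ → ℂ := fun t => (t : ℂ) ^ ((x : ℂ) - 1) * (1 - (t : ℂ)) ^ ((γ : ℂ) - 1) with hg0
  set f : ℝ → ℂ :=
    Set.indicator (Set.Iio 0) (fun v => |Real.exp v| • g0 (Real.exp v)) with hf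
  have hderiv : ∀ v ∈ Set.Iio (0 : ℝ),
      HasDerivWithinAt Real.exp (Real.exp v) (Set.Iio 0) v :=
    fun v _ => (Real.hasDerivAt_exp v).hasDerivWithinAt
  have hinj : Set.InjOn Real.exp (Set.Iio 0) := Real.exp_injective.injOn
  -- change of variables identity, for each `b`
  have key : ∀ b : ℝ, Complex.betaIntegral ((x : ℂ) + (b / 2 : ℝ) * Complex.I) (γ : ℂ)
      = ∫ v : ℝ, 𝐞 (-(v * (-b / (4 * Real.pi)))) • f v := by
    intro b
    set s : ℂ := (x : ℂ) + (b / 2 : ℝ) * Complex.I with hs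
    have h1 : Complex.betaIntegral s (γ : ℂ)
        = ∫ t in Set.Ioo (0 : ℝ) 1, (t : ℂ) ^ (s - 1) * (1 - (t : ℂ)) ^ ((γ : ℂ) - 1) := by
      rw [Complex.betaIntegral, intervalIntegral.integral_of_le zero_le_one,
        MeasureTheory.integral_Ioc_eq_integral_Ioo]
    rw [h1, ← exp_image_Iio,
      MeasureTheory.integral_image_eq_integral_abs_deriv_smul measurableSet_Iio hderiv hinj]
    have h2 : (fun v : ℝ => 𝐞 (-(v * (-b / (4 * Real.pi)))) • f v)
        = Set.indicator (Set.Iio 0)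
            (fun v => 𝐞 (-(v * (-b / (4 * Real.pi)))) • (|Real.exp v| • g0 (Real.exp v))) := by
      funext v
      by_cases hv : v ∈ Set.Iio (0 : ℝ) <;>
        simp [hf, Set.indicator_of_mem, Set.indicator_of_notMem, hv]
    rw [h2, MeasureTheory.integral_indicator measurableSet_Iio]
    refine MeasureTheory.setIntegral_congr_fun measurableSet_Iio fun v hv => ?_
    have e1 : ((Real.exp v : ℝ) : ℂ) ^ (s - 1) = Complex.exp (v * (s - 1)) :=
      ofReal_exp_cpow v (s - 1)
    have e2 : ((Real.exp v : ℝ) : ℂ) ^ ((x : ℂ) - 1) = Complex.exp (v * ((x : ℂ) - 1)) :=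
      ofReal_exp_cpow v ((x : ℂ) - 1)
    have e3 : 𝐞 (-(v * (-b / (4 * Real.pi)))) • (|Real.exp v| • g0 (Real.exp v))
        = Complex.exp ((v : ℂ) * ((b / 2 : ℝ) : ℂ) * Complex.I) *
            (|Real.exp v| • g0 (Real.exp v)) := by
      rw [Circle.smul_def, Real.fourierChar_apply]
      have hπ : (Real.pi : ℝ) ≠ 0 := Real.pi_ne_zero
      have hr : 2 * Real.pi * -(v * (-b / (4 * Real.pi))) = v * (b / 2) := by
        field_simp; ring
      rw [hr, Complex.ofReal_mul, smul_eq_mul]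
    have e4 : (v : ℂ) * (s - 1)
        = (v : ℂ) * ((x : ℂ) - 1) + (v : ℂ) * ((b / 2 : ℝ) : ℂ) * Complex.I := by
      rw [hs]; push_cast; ring
    rw [e3, hg0]
    simp only [e1, e2, e4, Complex.exp_add, Complex.real_smul]
    ring
  -- integrability of `f`
  have hg0int : IntegrableOn g0 (Set.Ioo (0 : ℝ) 1) := by
    have := (Complex.betaIntegral_convergent (u := (x : ℂ)) (v := (γ : ℂ))
      (by simpa using hx) (by simpa using hγ))
    have h' : IntegrableOn g0 (Set.Ioc (0 : ℝ) 1) := by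
      simpa [hg0] using (intervalIntegrable_iff_integrableOn_Ioc_of_le zero_le_one).mp this
    exact h'.mono_set Set.Ioo_subset_Ioc_self
  have hfint : Integrable f := by
    rw [hf, MeasureTheory.integrable_indicator_iff measurableSet_Iio]
    exact (MeasureTheory.integrableOn_image_iff_integrableOn_abs_deriv_smul
      measurableSet_Iio hderiv hinj g0).mp (by rwa [exp_image_Iio])
  -- apply Riemann–Lebesgue
  have hRL := Real.tendsto_integral_exp_smul_cocompact f
  have hmap : Tendsto (fun b : ℝ => -b / (4 * Real.pi)) atTop (cocompact ℝ) := by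
    have h4π : (0 : ℝ) < 4 * Real.pi := by positivity
    have : Tendsto (fun b : ℝ => -b / (4 * Real.pi)) atTop atBot := by
      exact (tendsto_neg_atTop_atBot).atBot_div_const h4π
    rw [cocompact_eq_atBot_atTop]
    exact this.mono_right le_sup_left
  have := hRL.comp hmap
  refine this.congr fun b => (key b).symm

theorem stmt9 (n k : ℤ) (hk : 1 ≤ k) (γ : ℝ) (hγ : 0 < γ)
    (hkn : (k : ℝ) < (n : ℝ) / 2 - γ) :
    ∀ a : ℝ, ((n : ℝ) - (k : ℝ) - 2) / 2 ≤ a →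
      Filter.Tendsto (fun b : ℝ => ThetaR γ a b) Filter.atTop Filter.atTop := by
  intro a ha
  have hk' : (1 : ℝ) ≤ (k : ℝ) := by exact_mod_cast hk
  set x : ℝ := (1 - γ + a) / 2 with hxdef
  have hx : 0 < x := by rw [hxdef]; linarith
  set σ : ℝ → ℂ := fun b => (x : ℂ) + ((b / 2 : ℝ) : ℂ) * Complex.I with hσ
  set B : ℝ → ℂ := fun b => Complex.betaIntegral (σ b) (γ : ℂ) with hBdef
  have hσre : ∀ b : ℝ, (σ b).re = x := by intro b; simp [hσ]
  have hγre : (0 : ℝ) < ((γ : ℂ)).re := by simpa using hγ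
  have hσγre : ∀ b : ℝ, (0 : ℝ) < (σ b + (γ : ℂ)).re := by
    intro b; simp only [Complex.add_re, hσre, Complex.ofReal_re]; linarith
  have hid : ∀ b : ℝ, Complex.Gamma (σ b) * Complex.Gamma (γ : ℂ)
      = Complex.Gamma (σ b + (γ : ℂ)) * B b := fun b =>
    Complex.Gamma_mul_Gamma_eq_betaIntegral (by rw [hσre b]; exact hx) hγre
  have hΓσ : ∀ b : ℝ, Complex.Gamma (σ b) ≠ 0 := fun b =>
    Complex.Gamma_ne_zero_of_re_pos (by rw [hσre b]; exact hx)
  have hΓγ : Complex.Gamma (γ : ℂ) ≠ 0 := Complex.Gamma_ne_zero_of_re_pos hγre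
  have hΓσγ : ∀ b : ℝ, Complex.Gamma (σ b + (γ : ℂ)) ≠ 0 := fun b =>
    Complex.Gamma_ne_zero_of_re_pos (hσγre b)
  have hBne : ∀ b : ℝ, B b ≠ 0 := by
    intro b hb
    exact (mul_ne_zero (hΓσ b) hΓγ) (by rw [hid b, hb, mul_zero])
  -- express ThetaR via the Beta integral
  have hTheta : ∀ b : ℝ, ThetaR γ a b
      = (4 : ℝ) ^ γ * ‖Complex.Gamma (γ : ℂ)‖ ^ 2 / ‖B b‖ ^ 2 := by
    intro b
    have hcast1 : (((1 + γ + a) / 2 : ℝ) : ℂ) + ((b / 2 : ℝ) : ℂ) * Complex.I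
        = σ b + (γ : ℂ) := by
      rw [hσ, hxdef]; push_cast; ring
    have hcast2 : (((1 - γ + a) / 2 : ℝ) : ℂ) + ((b / 2 : ℝ) : ℂ) * Complex.I = σ b := by
      rw [hσ, hxdef]
    have hΓeq : Complex.Gamma (σ b + (γ : ℂ))
        = Complex.Gamma (σ b) * Complex.Gamma (γ : ℂ) / B b := by
      rw [eq_div_iff (hBne b)]; exact (hid b).symm
    have hnorm : ‖Complex.Gamma (σ b + (γ : ℂ))‖
        = ‖Complex.Gamma (σ b)‖ * ‖Complex.Gamma (γ : ℂ)‖ / ‖B b‖ := by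
      rw [hΓeq, norm_div, norm_mul]
    rw [ThetaR, hcast1, hcast2, hnorm]
    have h1 : ‖Complex.Gamma (σ b)‖ ≠ 0 := norm_ne_zero_iff.mpr (hΓσ b)
    have h2 : ‖B b‖ ≠ 0 := norm_ne_zero_iff.mpr (hBne b)
    generalize hG : ‖Complex.Gamma (σ b)‖ = G at h1 ⊢
    generalize hBn : ‖B b‖ = Bn at h2 ⊢
    rw [div_eq_div_iff (pow_ne_zero 2 h1) (pow_ne_zero 2 h2)]
    field_simp
  -- final limit
  have hB0 : Tendsto (fun b : ℝ => ‖B b‖ ^ 2) atTop (𝓝 0) := by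
    have := (beta_tendsto_zero hx hγ).norm
    have h2 := this.pow 2
    simpa [hBdef, hσ] using h2
  have hBpos : ∀ b : ℝ, 0 < ‖B b‖ ^ 2 := fun b =>
    pow_pos (norm_pos_iff.mpr (hBne b)) 2
  have hBin : Tendsto (fun b : ℝ => ‖B b‖ ^ 2) atTop (𝓝[>] 0) :=
    tendsto_nhdsWithin_of_tendsto_nhds_of_eventually_within _ hB0
      (Eventually.of_forall fun b => hBpos b)
  have hinv : Tendsto (fun b : ℝ => (‖B b‖ ^ 2)⁻¹) atTop atTop :=
    hBin.inv_tendsto_nhdsGT_zero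
  have hC : (0 : ℝ) < (4 : ℝ) ^ γ * ‖Complex.Gamma (γ : ℂ)‖ ^ 2 := by
    have := norm_pos_iff.mpr hΓγ
    positivity
  have := hinv.const_mul_atTop hC
  refine this.congr fun b => ?_
  rw [hTheta b, div_eq_mul_inv]
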